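/- Triviality of the deficiency spaces on the half-line for |α| ≥ 1/2 (core of Proposition 3.4(ii)): Let α ∈ ℝ with |α| ≥ 1/2, let z = i or z = −i, and let f = (f₁, f₂) : (0,∞) → ℂ² be continuously differentiable with ∫₀^∞ |f(x)|²_{ℂ²} dx < ∞ and satisfying for all x > 0 the system f₂'(x) + (α/x) f₂(x) = z f₁(x) and −f₁'(x) + (α/x) f₁(x) = z f₂(x). Then f ≡ 0. -/

import Mathlib

open MeasureTheory Real Set Filter Topology

noncomputable section

theorem aux_halfline (α : ℝ) (hα : 1 / 2 ≤ α)
    (z : ℂ) (hz : z = Complex.I ∨ z = -Complex.I)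
    (f₁ f₂ : ℝ → ℂ)
    (hf₁ : ContDiffOn ℝ 1 f₁ (Ioi 0)) (hf₂ : ContDiffOn ℝ 1 f₂ (Ioi 0))
    (hL2 : IntegrableOn (fun x => ‖f₁ x‖ ^ 2 + ‖f₂ x‖ ^ 2) (Ioi 0))
    (heq : ∀ x ∈ Ioi (0 : ℝ),
      deriv f₂ x + ((α / x : ℝ) : ℂ) * f₂ x = z * f₁ x
      ∧ -deriv f₁ x + ((α / x : ℝ) : ℂ) * f₁ x = z * f₂ x) :
    ∀ x ∈ Ioi (0 : ℝ), f₁ x = 0 ∧ f₂ x = 0 := by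
  have hz1 : (starRingEnd ℂ) z * z = 1 := by
    rcases hz with h | h <;> subst h <;> simp [Complex.ext_iff]
  have hz2 : (starRingEnd ℂ) z * (starRingEnd ℂ) z = -1 := by
    rcases hz with h | h <;> subst h <;> simp [Complex.ext_iff]
  have hznorm : ‖z‖ = 1 := by rcases hz with h | h <;> subst h <;> simp
  set g : ℝ → ℝ := fun x => ‖f₁ x‖ ^ 2 + ‖f₂ x‖ ^ 2 with hgdef
  set B : ℝ → ℝ := fun x => ((starRingEnd ℂ) z * (f₁ x * (starRingEnd ℂ) (f₂ x))).re with hBdef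
  have hd₁ : ∀ x ∈ Ioi (0:ℝ), HasDerivAt f₁ (deriv f₁ x) x := fun x hx =>
    ((hf₁.differentiableOn one_ne_zero).differentiableAt (isOpen_Ioi.mem_nhds hx)).hasDerivAt
  have hd₂ : ∀ x ∈ Ioi (0:ℝ), HasDerivAt f₂ (deriv f₂ x) x := fun x hx =>
    ((hf₂.differentiableOn one_ne_zero).differentiableAt (isOpen_Ioi.mem_nhds hx)).hasDerivAt
  have hc₁ : ContinuousOn f₁ (Ioi 0) := hf₁.continuousOn
  have hc₂ : ContinuousOn f₂ (Ioi 0) := hf₂.continuousOn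
  have hgnn : ∀ x, 0 ≤ g x := fun x => by positivity
  have hBg : ∀ x, |B x| ≤ g x := by
    intro x
    have h1 : |B x| ≤ ‖(starRingEnd ℂ) z * (f₁ x * (starRingEnd ℂ) (f₂ x))‖ :=
      Complex.abs_re_le_norm _
    have h2 : ‖(starRingEnd ℂ) z * (f₁ x * (starRingEnd ℂ) (f₂ x))‖ = ‖f₁ x‖ * ‖f₂ x‖ := by
      simp [hznorm]
    rw [h2] at h1
    have hgx : g x = ‖f₁ x‖ ^ 2 + ‖f₂ x‖ ^ 2 := rfl
    rw [hgx]
    nlinarith [norm_nonneg (f₁ x), norm_nonneg (f₂ x), sq_nonneg (‖f₁ x‖ - ‖f₂ x‖)]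
  have hBd : ∀ x ∈ Ioi (0:ℝ), HasDerivAt B (-(g x)) x := by
    intro x hx
    obtain ⟨he2, he1⟩ := heq x hx
    have e₁ : deriv f₁ x = ((α / x : ℝ) : ℂ) * f₁ x - z * f₂ x := by
      linear_combination -he1
    have e₂ : deriv f₂ x = z * f₁ x - ((α / x : ℝ) : ℂ) * f₂ x := by
      linear_combination he2
    have hu : HasDerivAt (fun y => (starRingEnd ℂ) z * (f₁ y * (starRingEnd ℂ) (f₂ y)))
        ((starRingEnd ℂ) z *
          (deriv f₁ x * (starRingEnd ℂ) (f₂ x) + f₁ x * (starRingEnd ℂ) (deriv f₂ x))) x :=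
      (((hd₁ x hx).mul (hd₂ x hx).star)).const_mul _
    have key : (starRingEnd ℂ) z *
        (deriv f₁ x * (starRingEnd ℂ) (f₂ x) + f₁ x * (starRingEnd ℂ) (deriv f₂ x))
        = ((-(g x) : ℝ) : ℂ) := by
      rw [e₁, e₂]
      have hconj : (starRingEnd ℂ) (z * f₁ x - ((α / x : ℝ) : ℂ) * f₂ x)
          = (starRingEnd ℂ) z * (starRingEnd ℂ) (f₁ x)
            - ((α / x : ℝ) : ℂ) * (starRingEnd ℂ) (f₂ x) := by
        simp [map_sub, map_mul, Complex.conj_ofReal]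
      rw [hconj]
      have expand : (starRingEnd ℂ) z *
          ((((α / x : ℝ) : ℂ) * f₁ x - z * f₂ x) * (starRingEnd ℂ) (f₂ x)
            + f₁ x * ((starRingEnd ℂ) z * (starRingEnd ℂ) (f₁ x)
              - ((α / x : ℝ) : ℂ) * (starRingEnd ℂ) (f₂ x)))
          = ((starRingEnd ℂ) z * (starRingEnd ℂ) z) * (f₁ x * (starRingEnd ℂ) (f₁ x))
            - ((starRingEnd ℂ) z * z) * (f₂ x * (starRingEnd ℂ) (f₂ x)) := by ring
      rw [expand, hz1, hz2, Complex.mul_conj, Complex.mul_conj]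
      have hgx : g x = Complex.normSq (f₁ x) + Complex.normSq (f₂ x) := by
        simp [hgdef, Complex.sq_norm]
      rw [hgx]
      push_cast
      ring
    have := Complex.reCLM.hasFDerivAt.comp_hasDerivAt x hu
    rw [key] at this
    simp at this
    exact this
  have hBcont : ContinuousOn B (Ioi 0) := fun x hx =>
    (hBd x hx).continuousAt.continuousWithinAt
  have hBanti : AntitoneOn B (Ioi 0) := by
    apply antitoneOn_of_deriv_nonpos (convex_Ioi 0) hBcont
    · intro x hx
      rw [interior_Ioi] at hx
      exact (hBd x hx).differentiableAt.differentiableWithinAt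
    · intro x hx
      rw [interior_Ioi] at hx
      rw [(hBd x hx).deriv]
      simpa using hgnn x
  have hBint : IntegrableOn B (Ioi 0) := by
    apply Integrable.mono' hL2 (hBcont.aestronglyMeasurable measurableSet_Ioi)
    filter_upwards with x
    exact hBg x
  have hBnonneg : ∀ x ∈ Ioi (0:ℝ), 0 ≤ B x := by
    intro x₀ hx₀
    by_contra hneg
    push_neg at hneg
    have hsub : Ici x₀ ⊆ Ioi (0:ℝ) := fun y hy => mem_Ioi.mpr (lt_of_lt_of_le (mem_Ioi.mp hx₀) (mem_Ici.mp hy))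
    have h1 : IntegrableOn (fun x => ‖B x‖) (Ici x₀) := (hBint.mono_set hsub).norm
    have h2 : IntegrableOn (fun _ => -B x₀) (Ici x₀) := by
      apply Integrable.mono' h1 aestronglyMeasurable_const
      filter_upwards [ae_restrict_mem measurableSet_Ici] with y hy
      have hBy : B y ≤ B x₀ := hBanti hx₀ (hsub hy) hy
      simp only [Real.norm_eq_abs, abs_neg]
      rw [abs_of_neg hneg, abs_of_neg (by linarith : B y < 0)]
      linarith
    rw [integrableOn_const_iff (C := -B x₀)] at h2
    rcases h2 with h | h
    · simp at h
      linarith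
    · rw [Real.volume_Ici] at h
      exact (lt_irrefl _ h)
  have hBprod : ∀ x, |B x| ≤ ‖f₁ x‖ * ‖f₂ x‖ := by
    intro x
    have h1 : |B x| ≤ ‖(starRingEnd ℂ) z * (f₁ x * (starRingEnd ℂ) (f₂ x))‖ :=
      Complex.abs_re_le_norm _
    simpa [hznorm] using h1
  have hBnonpos : ∀ x ∈ Ioi (0:ℝ), B x ≤ 0 := by
    intro x₀ hx₀
    by_contra hpos
    push_neg at hpos
    set M := B x₀ with hM
    set φ : ℝ → ℝ := fun t => t ^ α * ‖f₁ t‖ with hφdef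
    have hIocsub : Ioc (0:ℝ) x₀ ⊆ Ioi 0 := fun y hy => hy.1
    have hlow : ∀ x ∈ Ioc (0:ℝ) x₀, M ≤ ‖f₁ x‖ * ‖f₂ x‖ := by
      intro x hx
      have h1 : M ≤ B x := hBanti hx.1 hx₀ hx.2
      exact le_trans h1 (le_trans (le_abs_self _) (hBprod x))
    have hsq : ∀ t : ℝ, 0 < t → t ^ (2*α) = (t ^ α) ^ 2 := by
      intro t ht
      rw [two_mul, Real.rpow_add ht, sq]
    have hφcont : ContinuousOn φ (Ioi 0) := by
      apply ContinuousOn.mul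
      · exact fun t ht =>
          (Real.continuousAt_rpow_const t α (Or.inl (ne_of_gt ht))).continuousWithinAt
      · exact hc₁.norm
    have hrpow_int : IntegrableOn (fun t => t ^ (2*α)) (Ioc 0 x₀) := by
      have h1 : IntegrableOn (fun t => t ^ (2*α)) (Ioo 0 x₀) :=
        (intervalIntegral.integrableOn_Ioo_rpow_iff hx₀).mpr (by linarith)
      exact h1.congr_set_ae Ioo_ae_eq_Ioc.symm
    have hf₁sq_int : IntegrableOn (fun t => ‖f₁ t‖ ^ 2) (Ioc 0 x₀) := by
      apply Integrable.mono' (hL2.mono_set hIocsub)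
        (((hc₁.mono hIocsub).norm.pow 2).aestronglyMeasurable measurableSet_Ioc)
      filter_upwards with t
      rw [Real.norm_eq_abs, abs_of_nonneg (sq_nonneg _)]
      simp only [hgdef, Pi.pow_apply]
      nlinarith [sq_nonneg ‖f₂ t‖]
    have hφint : IntegrableOn φ (Ioc 0 x₀) := by
      apply Integrable.mono' (hrpow_int.add hf₁sq_int)
        ((hφcont.mono hIocsub).aestronglyMeasurable measurableSet_Ioc)
      filter_upwards [ae_restrict_mem measurableSet_Ioc] with t ht
      have htp : (0:ℝ) < t := ht.1
      have h0 : 0 ≤ t ^ α := Real.rpow_nonneg htp.le α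
      rw [Real.norm_eq_abs, abs_of_nonneg (mul_nonneg h0 (norm_nonneg _))]
      simp only [Pi.add_apply]
      rw [hsq t htp]
      nlinarith [sq_nonneg (t ^ α - ‖f₁ t‖), norm_nonneg (f₁ t)]
    set J : ℝ → ℝ := fun x => ∫ t in (0:ℝ)..x, φ t with hJdef
    have hφII : ∀ x ∈ Ioc (0:ℝ) x₀, IntervalIntegrable φ volume 0 x := by
      intro x hx
      rw [intervalIntegrable_iff, uIoc_of_le hx.1.le]
      exact hφint.mono_set (Ioc_subset_Ioc_right hx.2)
    have hJset : ∀ x ∈ Ioc (0:ℝ) x₀, J x = ∫ t in Ioc 0 x, φ t := by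
      intro x hx
      rw [hJdef]
      exact intervalIntegral.integral_of_le hx.1.le
    have hφnn : ∀ t ∈ Ioi (0:ℝ), 0 ≤ φ t := fun t ht =>
      mul_nonneg (Real.rpow_nonneg (le_of_lt ht) α) (norm_nonneg _)
    have hJd : ∀ x ∈ Ioc (0:ℝ) x₀, HasDerivAt J (φ x) x := by
      intro x hx
      apply intervalIntegral.integral_hasDerivAt_right (hφII x hx)
      · exact ⟨Ioi 0, isOpen_Ioi.mem_nhds hx.1, hφcont.aestronglyMeasurable measurableSet_Ioi⟩
      · exact hφcont.continuousAt (isOpen_Ioi.mem_nhds hx.1)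
    set h : ℝ → ℂ := fun x => ((x ^ α : ℝ) : ℂ) * f₂ x with hhdef
    have hnormh : ∀ x ∈ Ioi (0:ℝ), ‖h x‖ = x ^ α * ‖f₂ x‖ := by
      intro x hx
      rw [hhdef]
      simp [norm_mul, Real.norm_eq_abs, abs_of_nonneg (Real.rpow_nonneg (le_of_lt hx) α)]
    have hhd : ∀ x ∈ Ioi (0:ℝ), HasDerivAt h (((x ^ α : ℝ) : ℂ) * (z * f₁ x)) x := by
      intro x hx
      have hxp : (0:ℝ) < x := hx
      have hr : HasDerivAt (fun y : ℝ => ((y ^ α : ℝ) : ℂ)) ((α * x ^ (α - 1) : ℝ) : ℂ) x :=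
        (Real.hasDerivAt_rpow_const (Or.inl (ne_of_gt hxp))).ofReal_comp
      have hprod := hr.mul (hd₂ x hx)
      obtain ⟨he2, _⟩ := heq x hx
      have e₂ : deriv f₂ x = z * f₁ x - ((α / x : ℝ) : ℂ) * f₂ x := by
        linear_combination he2
      have hreal : α * x ^ (α - 1) = x ^ α * (α / x) := by
        rw [Real.rpow_sub hxp, Real.rpow_one]
        field_simp
      have hcast : ((α * x ^ (α - 1) : ℝ) : ℂ) = ((x ^ α : ℝ) : ℂ) * ((α / x : ℝ) : ℂ) := by
        rw [← Complex.ofReal_mul, hreal]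
      have heq' : ((α * x ^ (α - 1) : ℝ) : ℂ) * f₂ x + ((x ^ α : ℝ) : ℂ) * deriv f₂ x
          = ((x ^ α : ℝ) : ℂ) * (z * f₁ x) := by
        rw [e₂, hcast]
        ring
      rwa [heq'] at hprod
    have hsmall : ∀ δ : ℝ, 0 < δ → ∀ η, η ∈ Ioc (0:ℝ) x₀ → ∃ a ∈ Ioo (0:ℝ) η, ‖h a‖ < δ := by
      intro δ hδ η hη
      by_contra hcon
      push_neg at hcon
      have hIoosub : Ioo (0:ℝ) η ⊆ Ioi 0 := fun y hy => hy.1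
      have hint2 : IntegrableOn (fun a => ‖f₂ a‖ ^ 2) (Ioo 0 η) := by
        apply Integrable.mono' (hL2.mono_set hIoosub)
          (((hc₂.mono hIoosub).norm.pow 2).aestronglyMeasurable measurableSet_Ioo)
        filter_upwards with t
        rw [Real.norm_eq_abs, abs_of_nonneg (sq_nonneg _)]
        simp only [hgdef, Pi.pow_apply]
        nlinarith [sq_nonneg ‖f₁ t‖]
      have hrint : IntegrableOn (fun a => δ ^ 2 * a ^ (-(2*α))) (Ioo 0 η) := by
        apply Integrable.mono' hint2
        · apply AEStronglyMeasurable.const_mul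
          apply ContinuousOn.aestronglyMeasurable _ measurableSet_Ioo
          exact fun t ht =>
            (Real.continuousAt_rpow_const t _ (Or.inl (ne_of_gt ht.1))).continuousWithinAt
        · filter_upwards [ae_restrict_mem measurableSet_Ioo] with a ha
          have hap : (0:ℝ) < a := ha.1
          have hpow : (0:ℝ) < a ^ α := Real.rpow_pos_of_pos hap α
          have h1 : δ ≤ a ^ α * ‖f₂ a‖ := by
            have := hcon a ha
            rwa [hnormh a hap] at this
          have hneg : a ^ (-(2*α)) = ((a ^ α) ^ 2)⁻¹ := by
            rw [Real.rpow_neg hap.le, hsq a hap]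
          rw [Real.norm_eq_abs, abs_of_nonneg
            (mul_nonneg (sq_nonneg _) (Real.rpow_nonneg hap.le _)), hneg]
          rw [mul_inv_le_iff₀ (by positivity)]
          nlinarith [norm_nonneg (f₂ a)]
      have hrint2 : IntegrableOn (fun a => a ^ (-(2*α))) (Ioo 0 η) := by
        have h' := hrint.const_mul ((δ ^ 2)⁻¹)
        have hδ2 : (δ:ℝ) ^ 2 ≠ 0 := by positivity
        have hfun : (fun a => (δ ^ 2)⁻¹ * (δ ^ 2 * a ^ (-(2*α)))) = fun a : ℝ => a ^ (-(2*α)) := by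
          funext a
          rw [← mul_assoc, inv_mul_cancel₀ hδ2, one_mul]
        rwa [hfun] at h'
      rw [intervalIntegral.integrableOn_Ioo_rpow_iff hη.1] at hrint2
      linarith
    have hhJ : ∀ x ∈ Ioc (0:ℝ) x₀, ‖h x‖ ≤ J x := by
      intro x hx
      apply le_of_forall_sub_le
      intro δ hδ
      obtain ⟨a, ha, hha⟩ := hsmall δ hδ x hx
      have hax : a ≤ x := ha.2.le
      have hsubIcc : uIcc a x ⊆ Ioi (0:ℝ) := by
        rw [uIcc_of_le hax]
        exact fun y hy => lt_of_lt_of_le ha.1 hy.1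
      have hcont' : ContinuousOn (fun t => ((t ^ α : ℝ) : ℂ) * (z * f₁ t)) (uIcc a x) := by
        apply ContinuousOn.mul
        · apply Complex.continuous_ofReal.comp_continuousOn
          exact fun t ht => (Real.continuousAt_rpow_const t α
            (Or.inl (ne_of_gt (hsubIcc ht)))).continuousWithinAt
        · exact (continuous_const.continuousOn).mul (hc₁.mono hsubIcc)
      have hII : IntervalIntegrable (fun t => ((t ^ α : ℝ) : ℂ) * (z * f₁ t)) volume a x :=
        hcont'.intervalIntegrable
      have hftc : ∫ t in a..x, ((t ^ α : ℝ) : ℂ) * (z * f₁ t) = h x - h a :=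
        intervalIntegral.integral_eq_sub_of_hasDerivAt
          (fun t ht => hhd t (hsubIcc ht)) hII
      have hbd : ‖h x - h a‖ ≤ ∫ t in a..x, φ t := by
        rw [← hftc]
        refine le_trans (intervalIntegral.norm_integral_le_integral_norm hax) ?_
        apply le_of_eq
        apply intervalIntegral.integral_congr
        intro t ht
        have htp : (0:ℝ) < t := hsubIcc ht
        simp [hφdef, norm_mul, hznorm, Real.norm_eq_abs,
          abs_of_nonneg (Real.rpow_nonneg htp.le α), mul_comm]
      have hsplit : J x = (∫ t in (0:ℝ)..a, φ t) + ∫ t in a..x, φ t := by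
        rw [hJdef]
        exact (intervalIntegral.integral_add_adjacent_intervals
          (hφII a ⟨ha.1, le_trans ha.2.le hx.2⟩)
          (by
            rw [intervalIntegrable_iff, uIoc_of_le hax]
            exact hφint.mono_set (fun y hy => ⟨lt_trans ha.1 hy.1, le_trans hy.2 hx.2⟩))).symm
      have hfirst : 0 ≤ ∫ t in (0:ℝ)..a, φ t := by
        rw [intervalIntegral.integral_of_le ha.1.le]
        apply setIntegral_nonneg measurableSet_Ioc
        exact fun t ht => hφnn t ht.1
      have hcalc : ‖h x‖ ≤ ‖h a‖ + ‖h x - h a‖ := by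
        have h2 := norm_add_le (h a) (h x - h a)
        simpa using h2
      have : ‖h x‖ ≤ δ + ∫ t in a..x, φ t := le_trans hcalc (add_le_add hha.le hbd)
      linarith
    have hkey : ∀ x ∈ Ioc (0:ℝ) x₀, M * x ^ α ≤ ‖f₁ x‖ * J x := by
      intro x hx
      have h1 : M ≤ ‖f₁ x‖ * ‖f₂ x‖ := hlow x hx
      have h2 : ‖h x‖ ≤ J x := hhJ x hx
      rw [hnormh x hx.1] at h2
      have h0 : (0:ℝ) ≤ x ^ α := Real.rpow_nonneg hx.1.le α
      nlinarith [norm_nonneg (f₁ x), norm_nonneg (f₂ x)]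
    have hJpos : ∀ x ∈ Ioc (0:ℝ) x₀, 0 < J x := by
      intro x hx
      have h1 := hkey x hx
      have h2 : (0:ℝ) < M * x ^ α := mul_pos hpos (Real.rpow_pos_of_pos hx.1 α)
      have hJnn : 0 ≤ J x := by
        rw [hJset x hx]
        apply setIntegral_nonneg measurableSet_Ioc
        exact fun t ht => hφnn t ht.1
      nlinarith [norm_nonneg (f₁ x)]
    have hf₁pos : ∀ x ∈ Ioc (0:ℝ) x₀, 0 < ‖f₁ x‖ := by
      intro x hx
      have h1 := hkey x hx
      have h2 : (0:ℝ) < M * x ^ α := mul_pos hpos (Real.rpow_pos_of_pos hx.1 α)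
      nlinarith [norm_nonneg (f₁ x), hJpos x hx]
    set C : ℝ := ∫ x in Ioi (0:ℝ), g x with hCdef
    have hmain : ∀ ε ∈ Ioo (0:ℝ) x₀, M * (Real.log (J x₀) - Real.log (J ε)) ≤ C := by
      intro ε hε
      have hεIoc : ε ∈ Ioc (0:ℝ) x₀ := ⟨hε.1, hε.2.le⟩
      have hx₀Ioc : x₀ ∈ Ioc (0:ℝ) x₀ := ⟨hx₀, le_rfl⟩
      have hIccsub : Icc ε x₀ ⊆ Ioc (0:ℝ) x₀ := fun y hy => ⟨lt_of_lt_of_le hε.1 hy.1, hy.2⟩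
      set F : ℝ → ℝ := fun x => (∫ t in ε..x, ‖f₁ t‖ ^ 2) - M * Real.log (J x) with hFdef
      have hFd : ∀ x ∈ Icc ε x₀, HasDerivAt F (‖f₁ x‖ ^ 2 - M * (φ x / J x)) x := by
        intro x hx
        have hxIoc : x ∈ Ioc (0:ℝ) x₀ := hIccsub hx
        have hK : HasDerivAt (fun y => ∫ t in ε..y, ‖f₁ t‖ ^ 2) (‖f₁ x‖ ^ 2) x := by
          apply intervalIntegral.integral_hasDerivAt_right
          · rw [intervalIntegrable_iff, uIoc_of_le hx.1]
            exact hf₁sq_int.mono_set (fun y hy => ⟨lt_trans hε.1 hy.1, le_trans hy.2 hxIoc.2⟩)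
          · exact ⟨Ioi 0, isOpen_Ioi.mem_nhds hxIoc.1,
              ((hc₁.norm.pow 2).aestronglyMeasurable measurableSet_Ioi)⟩
          · exact (hc₁.norm.pow 2).continuousAt (isOpen_Ioi.mem_nhds hxIoc.1)
        have hlog : HasDerivAt (fun y => Real.log (J y)) (φ x / J x) x :=
          (hJd x hxIoc).log (ne_of_gt (hJpos x hxIoc))
        exact hK.sub (hlog.const_mul M)
      have hFmono : MonotoneOn F (Icc ε x₀) := by
        apply monotoneOn_of_deriv_nonneg (convex_Icc ε x₀)
        · exact fun x hx => (hFd x hx).continuousAt.continuousWithinAt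
        · intro x hx
          rw [interior_Icc] at hx
          exact (hFd x (Ioo_subset_Icc_self hx)).differentiableAt.differentiableWithinAt
        · intro x hx
          rw [interior_Icc] at hx
          have hxIcc := Ioo_subset_Icc_self hx
          rw [(hFd x hxIcc).deriv]
          have hxIoc : x ∈ Ioc (0:ℝ) x₀ := hIccsub hxIcc
          have hJp := hJpos x hxIoc
          have hf₁p := hf₁pos x hxIoc
          have hk := hkey x hxIoc
          rw [sub_nonneg, mul_div_assoc' M (φ x) (J x), div_le_iff₀ hJp]
          have hφx : φ x = x ^ α * ‖f₁ x‖ := rfl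
          rw [hφx]
          nlinarith [mul_le_mul_of_nonneg_left hk (norm_nonneg (f₁ x))]
      have hFle : F ε ≤ F x₀ := hFmono ⟨le_rfl, hε.2.le⟩ ⟨hε.2.le, le_rfl⟩ hε.2.le
      have hFε : F ε = -(M * Real.log (J ε)) := by
        rw [hFdef]
        simp [intervalIntegral.integral_same]
      have hKle : (∫ t in ε..x₀, ‖f₁ t‖ ^ 2) ≤ C := by
        rw [intervalIntegral.integral_of_le hε.2.le]
        have hsub1 : Ioc ε x₀ ⊆ Ioc (0:ℝ) x₀ := fun y hy => ⟨lt_trans hε.1 hy.1, hy.2⟩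
        have hsub2 : Ioc ε x₀ ⊆ Ioi (0:ℝ) := fun y hy => lt_trans hε.1 hy.1
        calc (∫ t in Ioc ε x₀, ‖f₁ t‖ ^ 2) ≤ ∫ t in Ioc ε x₀, g t := by
              apply setIntegral_mono_on (hf₁sq_int.mono_set hsub1) (hL2.mono_set hsub2)
                measurableSet_Ioc
              intro t _
              simp only [hgdef]
              nlinarith [sq_nonneg ‖f₂ t‖]
          _ ≤ C := by
              rw [hCdef]
              apply setIntegral_mono_set hL2 (ae_of_all _ fun t => hgnn t)
                hsub2.eventuallyLE
      have hFx₀ : F x₀ = (∫ t in ε..x₀, ‖f₁ t‖ ^ 2) - M * Real.log (J x₀) := rfl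
      rw [hFε, hFx₀] at hFle
      linarith [hKle]
    -- sequence tending to 0
    have hφintIcc : IntegrableOn φ (Icc 0 x₀) := hφint.congr_set_ae Ioc_ae_eq_Icc.symm
    have hcontJ : ContinuousOn (fun x => ∫ t in Ioc 0 x, φ t) (Icc 0 x₀) :=
      intervalIntegral.continuousOn_primitive hφintIcc
    set u : ℕ → ℝ := fun n => x₀ / (n + 2) with hudef
    have hx₀' : (0:ℝ) < x₀ := hx₀
    have hun : ∀ n, u n ∈ Ioo (0:ℝ) x₀ := by
      intro n
      have hn2 : (1:ℝ) < (n:ℝ) + 2 := by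
        have : (0:ℝ) ≤ (n:ℝ) := Nat.cast_nonneg n
        linarith
      constructor
      · show 0 < x₀ / ((n:ℝ) + 2)
        exact div_pos hx₀' (by linarith)
      · show x₀ / ((n:ℝ) + 2) < x₀
        exact div_lt_self hx₀' hn2
    have hutend : Filter.Tendsto u atTop (𝓝 0) := by
      apply Filter.Tendsto.div_atTop (tendsto_const_nhds (x := x₀))
      exact Filter.tendsto_atTop_add_const_right _ 2 tendsto_natCast_atTop_atTop
    have hJu : Filter.Tendsto (fun n => J (u n)) atTop (𝓝 0) := by
      have h0mem : (0:ℝ) ∈ Icc (0:ℝ) x₀ := ⟨le_rfl, hx₀.le⟩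
      have hcwa : ContinuousWithinAt (fun x => ∫ t in Ioc 0 x, φ t) (Icc 0 x₀) 0 :=
        hcontJ 0 h0mem
      have hval : (∫ t in Ioc (0:ℝ) 0, φ t) = 0 := by simp
      have htendu : Filter.Tendsto u atTop (𝓝[Icc (0:ℝ) x₀] 0) :=
        tendsto_nhdsWithin_of_tendsto_nhds_of_eventually_within u hutend
          (Filter.Eventually.of_forall fun n => Icc_subset_Icc_left (le_refl 0)
            (Ioo_subset_Icc_self (hun n)))
      have := (hcwa.tendsto.comp htendu)
      rw [hval] at this
      apply this.congr
      intro n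
      exact (hJset (u n) ⟨(hun n).1, (hun n).2.le⟩).symm
    have hJupos : ∀ n, 0 < J (u n) := fun n => hJpos _ ⟨(hun n).1, (hun n).2.le⟩
    have hlogtend : Filter.Tendsto (fun n => Real.log (J (u n))) atTop atBot := by
      apply Real.tendsto_log_nhdsGT_zero.comp
      exact tendsto_nhdsWithin_of_tendsto_nhds_of_eventually_within _ hJu
        (Filter.Eventually.of_forall fun n => hJupos n)
    have hbdd : ∀ n, Real.log (J x₀) - C / M ≤ Real.log (J (u n)) := by
      intro n
      have h1 := hmain (u n) (hun n)
      have h2 : Real.log (J x₀) - Real.log (J (u n)) ≤ C / M := by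
        rw [le_div_iff₀ hpos]
        linear_combination h1
      linarith
    obtain ⟨n, hn⟩ :=
      (hlogtend.eventually (eventually_lt_atBot (Real.log (J x₀) - C / M))).exists
    exact absurd (hbdd n) (not_le.mpr hn)
  have hBzero : ∀ x ∈ Ioi (0:ℝ), B x = 0 := fun x hx =>
    le_antisymm (hBnonpos x hx) (hBnonneg x hx)
  intro x hx
  have hg0 : g x = 0 := by
    have h1 : HasDerivAt B (-(g x)) x := hBd x hx
    have h2 : HasDerivAt (fun _ => (0:ℝ)) (-(g x)) x := by
      apply h1.congr_of_eventuallyEq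
      filter_upwards [isOpen_Ioi.mem_nhds hx] with y hy
      exact (hBzero y hy).symm
    have := h2.unique (hasDerivAt_const x 0)
    linarith
  have hg0' : ‖f₁ x‖ ^ 2 + ‖f₂ x‖ ^ 2 = 0 := hg0
  have h1 : ‖f₁ x‖ = 0 := by nlinarith [sq_nonneg ‖f₁ x‖, sq_nonneg ‖f₂ x‖, norm_nonneg (f₁ x)]
  have h2 : ‖f₂ x‖ = 0 := by nlinarith [sq_nonneg ‖f₁ x‖, sq_nonneg ‖f₂ x‖, norm_nonneg (f₂ x)]
  exact ⟨norm_eq_zero.mp h1, norm_eq_zero.mp h2⟩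

/-- Triviality of the deficiency spaces on the half-line for `|α| ≥ 1/2`
(core of Proposition 3.4 (ii)): if `f = (f₁, f₂)` is continuously differentiable on `(0,∞)`,
square-integrable, and solves `τ_α f = z f` with `z = ± i`, then `f ≡ 0`. -/
theorem deficiency_trivial_halfline (α : ℝ) (hα : 1 / 2 ≤ |α|)
    (z : ℂ) (hz : z = Complex.I ∨ z = -Complex.I)
    (f₁ f₂ : ℝ → ℂ)
    (hf₁ : ContDiffOn ℝ 1 f₁ (Ioi 0)) (hf₂ : ContDiffOn ℝ 1 f₂ (Ioi 0))
    (hL2 : IntegrableOn (fun x => ‖f₁ x‖ ^ 2 + ‖f₂ x‖ ^ 2) (Ioi 0))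
    (heq : ∀ x ∈ Ioi (0 : ℝ),
      deriv f₂ x + ((α / x : ℝ) : ℂ) * f₂ x = z * f₁ x
      ∧ -deriv f₁ x + ((α / x : ℝ) : ℂ) * f₁ x = z * f₂ x) :
    ∀ x ∈ Ioi (0 : ℝ), f₁ x = 0 ∧ f₂ x = 0 := by
  rcases le_or_gt 0 α with hα0 | hα0
  · have hα' : 1 / 2 ≤ α := by rwa [abs_of_nonneg hα0] at hα
    exact aux_halfline α hα' z hz f₁ f₂ hf₁ hf₂ hL2 heq
  · have hα' : 1 / 2 ≤ -α := by rwa [abs_of_neg hα0] at hα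
    have hz' : -z = Complex.I ∨ -z = -Complex.I := by
      rcases hz with hh | hh
      · right; rw [hh]
      · left; rw [hh]; ring
    have hL2' : IntegrableOn (fun x => ‖f₂ x‖ ^ 2 + ‖f₁ x‖ ^ 2) (Ioi 0) := by
      apply hL2.congr
      filter_upwards with x
      ring
    have heq' : ∀ x ∈ Ioi (0 : ℝ),
        deriv f₁ x + ((-α / x : ℝ) : ℂ) * f₁ x = (-z) * f₂ x
        ∧ -deriv f₂ x + ((-α / x : ℝ) : ℂ) * f₂ x = (-z) * f₁ x := by
      intro x hx
      obtain ⟨h1, h2⟩ := heq x hx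
      push_cast at h1 h2 ⊢
      constructor
      · linear_combination -h2
      · linear_combination -h1
    have hmain := aux_halfline (-α) hα' (-z) hz' f₂ f₁ hf₂ hf₁ hL2' heq'
    exact fun x hx => ⟨(hmain x hx).2, (hmain x hx).1⟩

end
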